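/- Let G = (S, 𝓕) be an arbitrary greedoid and w : 𝓛(𝓕) → ℝ an objective function on feasible orderings. Assume that whenever (a_1, …, a_i, x) is a feasible ordering of a set A ∪ {x} ∈ 𝓕 (with A = {a_1,…,a_i}, i = 0 possible) such that w((a_1,…,a_i,x)) ≥ w((a_1,…,a_i,y)) for every y ∈ Γ(A), the following two conditions hold: (1) w((a_1,…,a_i,b_1,…,b_j,x,c_1,…,c_k)) ≥ w((a_1,…,a_i,b_1,…,b_j,z,c_1,…,c_k)) whenever both strings are in 𝓛(𝓕); (2) w((a_1,…,a_i,x,b_1,…,b_j,z,c_1,…,c_k)) ≥ w((a_1,…,a_i,z,b_1,…,b_j,x,c_1,…,c_k)) whenever both strings are in 𝓛(𝓕). Then every ordering produced by the greedy algorithm is a feasible ordering of a base of G that maximizes w over all feasible orderings of bases. -/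

import Mathlib

open Finset

variable {α : Type*} [DecidableEq α] [Fintype α]

/-- `X` is subfeasible: contained in some feasible set. -/
def Subfeasible (F : Set (Finset α)) (X : Finset α) : Prop :=
  ∃ Y ∈ F, X ⊆ Y

/-- Greedoid axioms: `∅` is feasible, and the exchange property. -/
def IsGreedoid (F : Set (Finset α)) : Prop :=
  (∅ : Finset α) ∈ F ∧
    ∀ X ∈ F, ∀ Y ∈ F, X.card < Y.card → ∃ y ∈ Y, y ∉ X ∧ insert y X ∈ F

/-- Local union property. -/
def LocalUnion (F : Set (Finset α)) : Prop :=
  ∀ A ∈ F, ∀ B ∈ F, Subfeasible F (A ∪ B) → A ∪ B ∈ F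

/-- Local intersection property. -/
def LocalInter (F : Set (Finset α)) : Prop :=
  ∀ A ∈ F, ∀ B ∈ F, Subfeasible F (A ∪ B) → A ∩ B ∈ F

/-- Local forest property. -/
def LocalForest (F : Set (Finset α)) : Prop :=
  ∀ A ∈ F, ∀ x y z : α,
    insert x A ∈ F → insert y A ∈ F → insert x (insert y A) ∈ F →
      insert z (insert x (insert y A)) ∈ F →
      insert z (insert x A) ∈ F ∨ insert z (insert y A) ∈ F

/-- The rank function of a greedoid: max cardinality of a feasible subset. -/
noncomputable def grank (F : Set (Finset α)) (A : Finset α) : ℕ :=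
  sSup {n : ℕ | ∃ X ∈ F, X ⊆ A ∧ X.card = n}

/-- A base: a feasible set of maximum size. -/
def IsBase (F : Set (Finset α)) (B : Finset α) : Prop :=
  B ∈ F ∧ ∀ C ∈ F, C.card ≤ B.card

/-- The set of continuations of a feasible set `A`. -/
def Gamma (F : Set (Finset α)) (A : Finset α) : Set α :=
  {x | x ∉ A ∧ insert x A ∈ F}

/-- `P` is the `x`-path in `A`: the unique inclusion-minimal feasible subset
of `A` containing `x`. -/
def IsPathIn (F : Set (Finset α)) (A : Finset α) (x : α) (P : Finset α) : Prop :=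
  P ∈ F ∧ P ⊆ A ∧ x ∈ P ∧ ∀ Q ∈ F, Q ⊆ A → x ∈ Q → P ⊆ Q

/-- `P` is a path. -/
def IsPath (F : Set (Finset α)) (P : Finset α) : Prop :=
  ∃ A ∈ F, ∃ x ∈ A, IsPathIn F A x P

/-- `l` is a feasible ordering (of the set of its elements): every prefix is feasible. -/
def FeasibleOrdering (F : Set (Finset α)) (l : List α) : Prop :=
  l.Nodup ∧ ∀ i : ℕ, (l.take i).toFinset ∈ F

/-- `B` is a greedy base for maximizing `w`. -/
def GreedyMaxBase (F : Set (Finset α)) (w : Finset α → ℝ) (B : Finset α) : Prop :=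
  IsBase F B ∧ ∃ l : List α, FeasibleOrdering F l ∧ l.toFinset = B ∧
    ∀ (i : ℕ) (hi : i < l.length), ∀ y ∈ Gamma F (l.take i).toFinset,
      w (insert y (l.take i).toFinset) ≤ w (insert (l.get ⟨i, hi⟩) (l.take i).toFinset)

/-- `B` is a greedy base for minimizing `w`. -/
def GreedyMinBase (F : Set (Finset α)) (w : Finset α → ℝ) (B : Finset α) : Prop :=
  IsBase F B ∧ ∃ l : List α, FeasibleOrdering F l ∧ l.toFinset = B ∧
    ∀ (i : ℕ) (hi : i < l.length), ∀ y ∈ Gamma F (l.take i).toFinset,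
      w (insert (l.get ⟨i, hi⟩) (l.take i).toFinset) ≤ w (insert y (l.take i).toFinset)

/-- The shadow vector of a feasible set `B`: `sh_B(x) = |B| - r(B \ {x})`. -/
noncomputable def shVec (F : Set (Finset α)) (B : Finset α) : α → ℝ :=
  fun x => (B.card : ℝ) - (grank F (B.erase x) : ℝ)


section KLAux

private lemma fo_take {F : Set (Finset α)} {l : List α} (h : FeasibleOrdering F l) (i : ℕ) :
    FeasibleOrdering F (l.take i) := by
  refine ⟨(List.take_sublist i l).nodup h.1, fun j => ?_⟩
  rw [List.take_take]
  exact h.2 _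

private lemma getElem_not_mem_take {l : List α} (hl : l.Nodup) (i : ℕ) (h : i < l.length) :
    l[i] ∉ (l.take i).toFinset := by
  have h1 : (l.take (i+1)).Nodup := (List.take_sublist _ _).nodup hl
  rw [← List.take_concat_get h, List.concat_eq_append, List.nodup_append] at h1
  intro hmem
  rw [List.mem_toFinset] at hmem
  exact h1.2.2 _ hmem _ (List.mem_singleton_self _) rfl

private lemma take_succ_toFinset (l : List α) (i : ℕ) (h : i < l.length) :
    (l.take (i+1)).toFinset = insert l[i] (l.take i).toFinset := by
  rw [← List.take_concat_get h, List.concat_eq_append, List.toFinset_append]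
  ext a
  simp [or_comm]

private lemma fo_snoc {F : Set (Finset α)} {l : List α} {x : α}
    (h : FeasibleOrdering F l) (hx : x ∉ l.toFinset) (hF : insert x l.toFinset ∈ F) :
    FeasibleOrdering F (l ++ [x]) := by
  rw [List.mem_toFinset] at hx
  constructor
  · rw [List.nodup_append]
    exact ⟨h.1, List.nodup_singleton x,
      fun a ha b hb hab => hx (by rw [List.mem_singleton.mp hb] at hab; rwa [hab] at ha)⟩
  · intro i
    rcases le_or_gt i l.length with hi | hi
    · rw [List.take_append_of_le_length hi]; exact h.2 i
    · rw [List.take_of_length_le (by simp; omega), List.toFinset_append]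
      have h2 : l.toFinset ∪ [x].toFinset = insert x l.toFinset := by ext a; simp [or_comm]
      rw [h2]
      exact hF

private lemma mem_toFinset_take_mono {y : List α} {r s : ℕ} (h : r ≤ s) {a : α}
    (ha : a ∈ (y.take r).toFinset) : a ∈ (y.take s).toFinset := by
  rw [List.mem_toFinset] at *
  have heq : y.take r = (y.take s).take r := by rw [List.take_take, min_eq_left h]
  rw [heq] at ha
  exact List.take_subset _ _ ha

private lemma take_append_cons {L t : List α} {x : α} {i : ℕ} (hi : L.length < i) :
    (L ++ x :: t).take i = L ++ x :: t.take (i - L.length - 1) := by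
  rw [List.take_append, List.take_of_length_le (by omega)]
  congr 1
  obtain ⟨n, hn⟩ : ∃ n, i - L.length = n + 1 := ⟨i - L.length - 1, by omega⟩
  rw [hn, List.take_succ_cons, Nat.add_sub_cancel]

private lemma take_middle {y : List α} {r : ℕ} (hr : r < y.length) {i : ℕ} (hi : r < i) :
    y.take i = y.take r ++ y[r] :: (y.drop (r+1)).take (i - r - 1) := by
  conv_lhs => rw [← List.take_append_drop r y, List.drop_eq_getElem_cons hr]
  rw [take_append_cons (by rw [List.length_take]; omega), List.length_take,
    min_eq_left (le_of_lt hr)]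

private lemma getElem_middle (L t : List α) (x : α) {i : ℕ} (hi : i = L.length)
    (h : i < (L ++ x :: t).length) : (L ++ x :: t)[i] = x := by
  subst hi
  rw [List.getElem_append_right (le_refl _)]
  simp

private lemma toFinset_middle_erase {l t : List α} {z x : α}
    (hz1 : z ∉ l) (hz2 : z ∉ t) :
    insert x (((l ++ z :: t).toFinset).erase z) = (l ++ x :: t).toFinset := by
  ext a
  by_cases haz : a = z <;> by_cases hax : a = x <;>
    simp [haz, hax, hz1, hz2, Finset.mem_erase] <;> tauto

private lemma chain_lemma {F : Set (Finset α)} (hG : IsGreedoid F)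
    {y : List α} (hy : FeasibleOrdering F y) (x : α) (k : ℕ) :
    ∀ m, k < m → m ≤ y.length → x ∉ (y.take m).toFinset →
      insert x (y.take k).toFinset ∈ F →
      ∃ r, ∃ hr : r < y.length, k ≤ r ∧ r < m ∧
        ∀ j, r < j → j ≤ m → insert x ((y.take j).toFinset.erase (y[r]'hr)) ∈ F := by
  intro m
  induction m with
  | zero => omega
  | succ m ih =>
    intro hkm hmlen hxm hxk
    have hmlen' : m < y.length := by omega
    have hxm' : x ∉ (y.take m).toFinset := fun h => hxm (mem_toFinset_take_mono (by omega) h)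
    rcases Nat.lt_or_ge k m with hkm' | hkm'
    · obtain ⟨r, hr, hkr, hrm, hchain⟩ := ih hkm' (by omega) hxm' hxk
      have hyrm : y[r] ∈ (y.take m).toFinset := by
        rw [List.mem_toFinset]
        have h3 : (y.take m)[r]'(by rw [List.length_take]; omega) ∈ y.take m :=
          List.getElem_mem _
        rwa [List.getElem_take] at h3
      have htmnd : (y.take m).Nodup := (List.take_sublist _ _).nodup hy.1
      have htmcard : (y.take m).toFinset.card = m := by
        rw [List.toFinset_card_of_nodup htmnd, List.length_take]; omega
      have htm1card : (y.take (m+1)).toFinset.card = m + 1 := by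
        rw [List.toFinset_card_of_nodup ((List.take_sublist _ _).nodup hy.1), List.length_take]
        omega
      have hxe : x ∉ (y.take m).toFinset.erase y[r] := fun h => hxm' (Finset.mem_of_mem_erase h)
      have hBcard : (insert x ((y.take m).toFinset.erase y[r])).card = m := by
        rw [Finset.card_insert_of_notMem hxe, Finset.card_erase_of_mem hyrm, htmcard]
        omega
      obtain ⟨u, huY, huB, huF⟩ := hG.2 _ (hchain m hrm le_rfl) _ (hy.2 (m+1))
        (by rw [hBcard, htm1card]; omega)
      rw [take_succ_toFinset y m hmlen'] at huY
      have hrne : y[r] ≠ y[m] := fun h => by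
        have h4 := hy.1.getElem_inj_iff.mp h; omega
      rcases Finset.mem_insert.mp huY with hum | hum
      · refine ⟨r, hr, hkr, by omega, fun j hj1 hj2 => ?_⟩
        rcases Nat.lt_or_ge j (m+1) with hj | hj
        · exact hchain j hj1 (by omega)
        · have hj' : j = m + 1 := by omega
          subst hj'
          rw [take_succ_toFinset y m hmlen', Finset.erase_insert_of_ne hrne.symm,
            Finset.insert_comm]
          rw [hum] at huF
          exact huF
      · have hur : u = y[r] := by
          by_contra hne
          exact huB (Finset.mem_insert_of_mem (Finset.mem_erase.mpr ⟨hne, hum⟩))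
        refine ⟨m, hmlen', by omega, by omega, fun j hj1 hj2 => ?_⟩
        have hj' : j = m + 1 := by omega
        subst hj'
        rw [take_succ_toFinset y m hmlen',
          Finset.erase_insert (getElem_not_mem_take hy.1 m hmlen')]
        rw [hur, Finset.insert_comm, Finset.insert_erase hyrm] at huF
        exact huF
    · have hk : k = m := by omega
      subst hk
      refine ⟨k, by omega, le_rfl, by omega, fun j hj1 hj2 => ?_⟩
      have hj' : j = k + 1 := by omega
      subst hj'
      rw [take_succ_toFinset y k (by omega),
        Finset.erase_insert (getElem_not_mem_take hy.1 k (by omega))]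
      exact hxk

private lemma maxext {F : Set (Finset α)} {w : List α → ℝ} {l : List α} {x : α}
    (hc1 : ∀ (b c : List α) (z : α),
          FeasibleOrdering F (l ++ b ++ [x] ++ c) →
          FeasibleOrdering F (l ++ b ++ [z] ++ c) →
          w (l ++ b ++ [z] ++ c) ≤ w (l ++ b ++ [x] ++ c))
    (b : List α) (hfb : FeasibleOrdering F (l ++ b))
    (hxb : x ∉ (l ++ b).toFinset) (hxF : insert x (l ++ b).toFinset ∈ F) :
    ∀ u ∈ Gamma F (l ++ b).toFinset, w ((l ++ b) ++ [u]) ≤ w ((l ++ b) ++ [x]) := by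
  intro u hu
  obtain ⟨hu1, hu2⟩ := hu
  have h₁ : FeasibleOrdering F (l ++ b ++ [x] ++ []) := by
    rw [List.append_nil]
    exact fo_snoc hfb hxb hxF
  have h₂ : FeasibleOrdering F (l ++ b ++ [u] ++ []) := by
    rw [List.append_nil]
    exact fo_snoc hfb hu1 hu2
  have h3 := hc1 b [] u h₁ h₂
  rw [List.append_nil, List.append_nil] at h3
  exact h3

private lemma inner_step {F : Set (Finset α)} (hG : IsGreedoid F) {w : List α → ℝ}
    (hcond : ∀ (l : List α) (x : α), FeasibleOrdering F (l ++ [x]) →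
      (∀ y ∈ Gamma F l.toFinset, w (l ++ [y]) ≤ w (l ++ [x])) →
      ((∀ (b c : List α) (z : α),
          FeasibleOrdering F (l ++ b ++ [x] ++ c) →
          FeasibleOrdering F (l ++ b ++ [z] ++ c) →
          w (l ++ b ++ [z] ++ c) ≤ w (l ++ b ++ [x] ++ c)) ∧
       (∀ (b c : List α) (z : α),
          FeasibleOrdering F (l ++ [x] ++ b ++ [z] ++ c) →
          FeasibleOrdering F (l ++ [z] ++ b ++ [x] ++ c) →
          w (l ++ [z] ++ b ++ [x] ++ c) ≤ w (l ++ [x] ++ b ++ [z] ++ c))))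
    {g : List α} (hgf : FeasibleOrdering F g)
    (hggreedy : ∀ (i : ℕ) (hi : i < g.length), ∀ y ∈ Gamma F (g.take i).toFinset,
      w (g.take i ++ [y]) ≤ w (g.take i ++ [g.get ⟨i, hi⟩]))
    (k : ℕ) (hk : k < g.length) :
    ∀ s : ℕ, ∀ y : List α, FeasibleOrdering F y → y.length = g.length →
      y.take k = g.take k → s ≤ y.length →
      (∀ hs : s < y.length, y[s] = g[k]'hk) → g[k]'hk ∉ (y.take s).toFinset →
      ∃ y', FeasibleOrdering F y' ∧ y'.length = g.length ∧
        y'.take (k+1) = g.take (k+1) ∧ w y ≤ w y' := by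
  intro s
  induction s using Nat.strong_induction_on with
  | _ s ih =>
  intro y hy hylen hyk hsle hsx hxs
  have hky : k < y.length := by omega
  have hks : k ≤ s := by
    by_contra hc
    push_neg at hc
    have hsy : s < y.length := by omega
    have h3 : y[s]'hsy ∈ (y.take k).toFinset := by
      refine mem_toFinset_take_mono (show s + 1 ≤ k by omega) ?_
      rw [List.mem_toFinset]
      have h4 : (y.take (s+1))[s]'(by rw [List.length_take]; omega) ∈ y.take (s+1) :=
        List.getElem_mem _
      rwa [List.getElem_take] at h4
    rw [hsx hsy, hyk] at h3
    exact getElem_not_mem_take hgf.1 k hk h3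
  rcases Nat.eq_or_lt_of_le hks with hks' | hks'
  · -- terminal: s = k
    subst hks'
    refine ⟨y, hy, hylen, ?_, le_refl _⟩
    rw [← List.take_concat_get hky, ← List.take_concat_get hk,
      List.concat_eq_append, List.concat_eq_append, hyk, hsx hky]
  · -- main case: k < s
    have hxk : insert (g[k]'hk) (y.take k).toFinset ∈ F := by
      have h1 := hgf.2 (k+1)
      rw [take_succ_toFinset g k hk] at h1
      rw [hyk]
      exact h1
    obtain ⟨r, hr, hkr, hrs, hchain⟩ := chain_lemma hG hy (g[k]'hk) k s hks' hsle hxs hxk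
    have hLlen : (y.take r).length = r := by rw [List.length_take]; omega
    have hLfo : FeasibleOrdering F (y.take r) := fo_take hy r
    have hxL : g[k]'hk ∉ (y.take r).toFinset :=
      fun h => hxs (mem_toFinset_take_mono (le_of_lt hrs) h)
    have hxLl : g[k]'hk ∉ y.take r := fun h => hxL (List.mem_toFinset.mpr h)
    have hzL : y[r] ∉ y.take r := fun h => getElem_not_mem_take hy.1 r hr (List.mem_toFinset.mpr h)
    have hLx : insert (g[k]'hk) (y.take r).toFinset ∈ F := by
      have h1 := hchain (r+1) (by omega) (by omega)
      rwa [take_succ_toFinset y r hr, Finset.erase_insert (getElem_not_mem_take hy.1 r hr)] at h1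
    have hlb : y.take r = g.take k ++ (y.drop k).take (r - k) := by
      rw [← hyk]
      have h2 : r = k + (r - k) := by omega
      conv_lhs => rw [h2, List.take_add]
    have hgk1 : FeasibleOrdering F (g.take k ++ [g[k]'hk]) := by
      have h3 := fo_take hgf (k+1)
      rwa [← List.take_concat_get hk, List.concat_eq_append] at h3
    have hgmax : ∀ u ∈ Gamma F (g.take k).toFinset,
        w (g.take k ++ [u]) ≤ w (g.take k ++ [g[k]'hk]) := by
      have h3 := hggreedy k hk
      simpa using h3
    obtain ⟨hc1, _⟩ := hcond (g.take k) (g[k]'hk) hgk1 hgmax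
    have hmax : ∀ u ∈ Gamma F (y.take r).toFinset,
        w (y.take r ++ [u]) ≤ w (y.take r ++ [g[k]'hk]) := by
      rw [hlb]
      exact maxext hc1 _ (by rw [← hlb]; exact hLfo) (by rw [← hlb]; exact hxL)
        (by rw [← hlb]; exact hLx)
    have hLxfo : FeasibleOrdering F (y.take r ++ [g[k]'hk]) := fo_snoc hLfo hxL hLx
    obtain ⟨hC1, hC2⟩ := hcond (y.take r) (g[k]'hk) hLxfo hmax
    rcases Nat.eq_or_lt_of_le hsle with hseq | hslt
    · -- CASE 1 : s = y.length, x ∉ y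
      have hxy : g[k]'hk ∉ y.toFinset := by
        have h4 := hxs; rwa [hseq, List.take_length] at h4
      have hyd : y = y.take r ++ y[r] :: y.drop (r+1) := by
        conv_lhs => rw [← List.take_append_drop r y, List.drop_eq_getElem_cons hr]
      have hzT : y[r] ∉ y.drop (r+1) := by
        have hnd := hy.1
        rw [hyd] at hnd
        rw [List.nodup_middle, List.nodup_cons] at hnd
        exact fun h => hnd.1 (List.mem_append.mpr (Or.inr h))
      set y' := y.take r ++ g[k]'hk :: y.drop (r+1) with hy'def
      have hylen' : y'.length = g.length := by
        have h9 : (y.take r ++ (y[r]'hr) :: y.drop (r+1)).length = g.length := by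
          rw [← hyd]; exact hylen
        rw [hy'def]
        simp only [List.length_append, List.length_cons] at h9 ⊢
        omega
      have hnd' : y'.Nodup := by
        rw [hy'def, List.nodup_middle, List.nodup_cons]
        have h5 := hy.1
        rw [hyd] at h5
        rw [List.nodup_middle, List.nodup_cons] at h5
        refine ⟨fun h => hxy (List.mem_toFinset.mpr ?_), h5.2⟩
        rw [hyd]
        rcases List.mem_append.mp h with h | h
        · exact List.mem_append.mpr (Or.inl h)
        · exact List.mem_append.mpr (Or.inr (List.mem_cons_of_mem _ h))
      have hfo' : FeasibleOrdering F y' := by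
        refine ⟨hnd', fun i => ?_⟩
        rcases le_or_gt i r with hi | hi
        · have h6 : y'.take i = y.take i := by
            rw [hy'def, List.take_append_of_le_length (by omega), List.take_take,
              min_eq_left hi]
          rw [h6]; exact hy.2 i
        · have hmin : r < min i y.length := by omega
          have hminle : min i y.length ≤ y.length := min_le_right _ _
          have hty' : y'.take i = y.take r ++ g[k]'hk :: (y.drop (r+1)).take (i - r - 1) := by
            rw [hy'def, take_append_cons (by omega), hLlen]
          have hTsat : (y.drop (r+1)).take (i - r - 1)
              = (y.drop (r+1)).take (min i y.length - r - 1) := by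
            rcases le_or_gt i y.length with h | h
            · rw [min_eq_left h]
            · rw [min_eq_right (le_of_lt h),
                List.take_of_length_le (by rw [List.length_drop]; omega),
                List.take_of_length_le (by rw [List.length_drop]; omega)]
          have hty : y.take (min i y.length)
              = y.take r ++ y[r] :: (y.drop (r+1)).take (min i y.length - r - 1) :=
            take_middle hr hmin
          have hset : (y'.take i).toFinset
              = insert (g[k]'hk) ((y.take (min i y.length)).toFinset.erase (y[r]'hr)) := by
            rw [hty', hTsat, hty]
            exact (toFinset_middle_erase hzL (fun h => hzT (List.take_subset _ _ h))).symm
          rw [hset]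
          exact hchain (min i y.length) hmin (by omega)
      have e1 : y.take r ++ [] ++ [y[r]'hr] ++ y.drop (r+1) = y := by
        rw [List.append_nil]
        conv_rhs => rw [hyd]
        simp only [List.append_assoc, List.singleton_append, List.cons_append, List.nil_append]
      have e2 : y.take r ++ [] ++ [g[k]'hk] ++ y.drop (r+1) = y' := by
        rw [List.append_nil, hy'def]
        simp only [List.append_assoc, List.singleton_append, List.cons_append, List.nil_append]
      have hwle : w y ≤ w y' := by
        have h6 := hC1 [] (y.drop (r+1)) (y[r]'hr) (by rw [e2]; exact hfo')
          (by rw [e1]; exact hy)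
        rwa [e1, e2] at h6
      have hry' : r < y'.length := by omega
      have hy'r : ∀ h : r < y'.length, y'[r] = g[k]'hk := fun h =>
        getElem_middle _ _ _ hLlen.symm _
      have htkr : y'.take r = y.take r := by
        rw [hy'def, List.take_append_of_le_length (by omega), List.take_take, min_self]
      have htkk : y'.take k = g.take k := by
        rw [hy'def, List.take_append_of_le_length (by omega), List.take_take,
          min_eq_left (by omega), hyk]
      obtain ⟨y'', h1, h2, h3, h4⟩ := ih r hrs y' hfo' hylen' htkk (by omega) hy'r
        (by rw [htkr]; exact hxL)
      exact ⟨y'', h1, h2, h3, le_trans hwle h4⟩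
    · -- CASE 2 : s < y.length, x = y[s]
      have hxye : y[s]'hslt = g[k]'hk := hsx hslt
      have hblen : ((y.drop (r+1)).take (s - r - 1)).length = s - r - 1 := by
        rw [List.length_take, List.length_drop]; omega
      have hyd : y = y.take r ++ y[r] :: ((y.drop (r+1)).take (s - r - 1)
          ++ g[k]'hk :: y.drop (s+1)) := by
        conv_lhs => rw [← List.take_append_drop r y, List.drop_eq_getElem_cons hr]
        congr 1
        rw [← hxye]
        conv_lhs => rw [← List.take_append_drop (s - r - 1) (y.drop (r+1))]
        congr 1
        rw [List.drop_drop, show r + 1 + (s - r - 1) = s by omega,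
          List.drop_eq_getElem_cons hslt]
      set b := (y.drop (r+1)).take (s - r - 1) with hbdef
      set c := y.drop (s+1) with hcdef
      set y' := y.take r ++ (g[k]'hk) :: (b ++ (y[r]'hr) :: c) with hy'def
      have hp0 : List.Perm (y.take r ++ (g[k]'hk) :: (b ++ (y[r]'hr) :: c))
          (y.take r ++ (y[r]'hr) :: (b ++ (g[k]'hk) :: c)) := by
        apply List.Perm.append_left
        exact ((List.perm_middle.cons _).trans
          (List.Perm.swap (y[r]'hr) (g[k]'hk) (b ++ c))).trans
          (List.Perm.cons _ List.perm_middle.symm)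
      have hperm : List.Perm y' y := by
        rw [hy'def]
        nth_rewrite 3 [hyd]
        exact hp0
      have hnd' : y'.Nodup := hperm.nodup_iff.mpr hy.1
      have hylen' : y'.length = g.length := by rw [hperm.length_eq, hylen]
      have hznotbxc : y[r]'hr ∉ b ++ g[k]'hk :: c := by
        have h5 := hy.1
        rw [hyd] at h5
        rw [List.nodup_middle, List.nodup_cons] at h5
        exact fun h => h5.1 (List.mem_append.mpr (Or.inr h))
      have hzb : y[r]'hr ∉ b := fun h => hznotbxc (List.mem_append.mpr (Or.inl h))
      have hfo' : FeasibleOrdering F y' := by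
        refine ⟨hnd', fun i => ?_⟩
        rcases le_or_gt i r with hi | hi
        · have h6 : y'.take i = y.take i := by
            rw [hy'def, List.take_append_of_le_length (by omega), List.take_take,
              min_eq_left hi]
          rw [h6]; exact hy.2 i
        rcases le_or_gt i s with hi2 | hi2
        · -- r < i ≤ s
          have h7 : y'.take i = y.take r ++ g[k]'hk :: b.take (i - r - 1) := by
            rw [hy'def, take_append_cons (by omega), hLlen,
              List.take_append_of_le_length (by rw [hblen]; omega)]
          have h8 : y.take i = y.take r ++ y[r] :: b.take (i - r - 1) := by
            rw [take_middle hr (show r < i by omega)]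
            congr 2
            rw [hbdef, List.take_take, min_eq_left (by omega)]
          have hset : (y'.take i).toFinset
              = insert (g[k]'hk) ((y.take i).toFinset.erase (y[r]'hr)) := by
            rw [h7, h8]
            exact (toFinset_middle_erase hzL (fun h => hzb (List.take_subset _ _ h))).symm
          rw [hset]
          exact hchain i (by omega) hi2
        · -- i > s
          have hlen2 : (y.take r ++ g[k]'hk :: b).length = s := by
            simp only [List.length_append, List.length_cons, hLlen, hblen]; omega
          have hlen3 : (y.take r ++ y[r]'hr :: b).length = s := by
            simp only [List.length_append, List.length_cons, hLlen, hblen]; omega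
          have h7 : y'.take i = (y.take r ++ g[k]'hk :: b) ++ y[r]'hr :: c.take (i - s - 1) := by
            rw [hy'def, show y.take r ++ g[k]'hk :: (b ++ y[r]'hr :: c)
              = (y.take r ++ g[k]'hk :: b) ++ y[r]'hr :: c by simp,
              take_append_cons (by rw [hlen2]; omega), hlen2]
          have h8 : y.take i = (y.take r ++ y[r]'hr :: b) ++ g[k]'hk :: c.take (i - s - 1) := by
            conv_lhs => rw [hyd]
            rw [show y.take r ++ y[r]'hr :: (b ++ g[k]'hk :: c)
              = (y.take r ++ y[r]'hr :: b) ++ g[k]'hk :: c by simp,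
              take_append_cons (by rw [hlen3]; omega), hlen3]
          have hset : (y'.take i).toFinset = (y.take i).toFinset := by
            rw [h7, h8]
            ext a
            simp only [List.toFinset_append, List.toFinset_cons, Finset.mem_union,
              Finset.mem_insert, List.mem_toFinset]
            tauto
          rw [hset]
          exact hy.2 i
      have e1 : y.take r ++ [y[r]'hr] ++ b ++ [g[k]'hk] ++ c = y := by
        conv_rhs => rw [hyd]
        simp only [List.append_assoc, List.singleton_append, List.cons_append, List.nil_append]
      have e2 : y.take r ++ [g[k]'hk] ++ b ++ [y[r]'hr] ++ c = y' := by
        rw [hy'def]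
        simp only [List.append_assoc, List.singleton_append, List.cons_append, List.nil_append]
      have hwle : w y ≤ w y' := by
        have h6 := hC2 b c (y[r]'hr) (by rw [e2]; exact hfo') (by rw [e1]; exact hy)
        rwa [e1, e2] at h6
      have hy'r : ∀ h : r < y'.length, y'[r] = g[k]'hk := fun h =>
        getElem_middle _ _ _ hLlen.symm _
      have htkr : y'.take r = y.take r := by
        rw [hy'def, List.take_append_of_le_length (by omega), List.take_take, min_self]
      have htkk : y'.take k = g.take k := by
        rw [hy'def, List.take_append_of_le_length (by omega), List.take_take,
          min_eq_left (by omega), hyk]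
      obtain ⟨y'', h1, h2, h3, h4⟩ := ih r hrs y' hfo' hylen' htkk (by omega) hy'r
        (by rw [htkr]; exact hxL)
      exact ⟨y'', h1, h2, h3, le_trans hwle h4⟩

end KLAux

/-- Korte–Lovász: optimality of the greedy algorithm for order-dependent
objective functions on greedoids. -/
theorem statement1 (F : Set (Finset α)) (hG : IsGreedoid F) (w : List α → ℝ)
    (hcond : ∀ (l : List α) (x : α), FeasibleOrdering F (l ++ [x]) →
      (∀ y ∈ Gamma F l.toFinset, w (l ++ [y]) ≤ w (l ++ [x])) →
      ((∀ (b c : List α) (z : α),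
          FeasibleOrdering F (l ++ b ++ [x] ++ c) →
          FeasibleOrdering F (l ++ b ++ [z] ++ c) →
          w (l ++ b ++ [z] ++ c) ≤ w (l ++ b ++ [x] ++ c)) ∧
       (∀ (b c : List α) (z : α),
          FeasibleOrdering F (l ++ [x] ++ b ++ [z] ++ c) →
          FeasibleOrdering F (l ++ [z] ++ b ++ [x] ++ c) →
          w (l ++ [z] ++ b ++ [x] ++ c) ≤ w (l ++ [x] ++ b ++ [z] ++ c))))
    -- `g` is an ordering produced by the greedy algorithm:
    (g : List α) (hgf : FeasibleOrdering F g)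
    (hgstop : Gamma F g.toFinset = ∅)
    (hggreedy : ∀ (i : ℕ) (hi : i < g.length), ∀ y ∈ Gamma F (g.take i).toFinset,
      w (g.take i ++ [y]) ≤ w (g.take i ++ [g.get ⟨i, hi⟩])) :
    IsBase F g.toFinset ∧
      ∀ m : List α, FeasibleOrdering F m → IsBase F m.toFinset → w m ≤ w g := by
  have hgF : g.toFinset ∈ F := by
    have h1 := hgf.2 g.length
    rwa [List.take_length] at h1
  have hbase : IsBase F g.toFinset := by
    refine ⟨hgF, fun C hC => ?_⟩
    by_contra hlt
    push_neg at hlt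
    obtain ⟨u, huC, hu1, hu2⟩ := hG.2 _ hgF _ hC hlt
    have h2 : u ∈ Gamma F g.toFinset := ⟨hu1, hu2⟩
    rw [hgstop] at h2
    exact Set.notMem_empty u h2
  refine ⟨hbase, fun m hm hmb => ?_⟩
  have houter : ∀ d k, k + d = g.length → ∀ y, FeasibleOrdering F y →
      y.length = g.length → y.take k = g.take k → w y ≤ w g := by
    intro d
    induction d with
    | zero =>
      intro k hkd y hy hlen htake
      have hyg : y = g := by
        have h1 : y.take k = y := List.take_of_length_le (by omega)
        have h2 : g.take k = g := List.take_of_length_le (by omega)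
        rwa [h1, h2] at htake
      rw [hyg]
    | succ d ihd =>
      intro k hkd y hy hlen htake
      have hk : k < g.length := by omega
      -- find position of g[k] in y (or y.length if absent)
      have hstep : ∃ y', FeasibleOrdering F y' ∧ y'.length = g.length ∧
          y'.take (k+1) = g.take (k+1) ∧ w y ≤ w y' := by
        by_cases hxy : g[k]'hk ∈ y
        · obtain ⟨s, hs, hsget⟩ := List.getElem_of_mem hxy
          exact inner_step hG hcond hgf hggreedy k hk s y hy hlen htake (le_of_lt hs)
            (fun h => hsget) (by rw [← hsget]; exact getElem_not_mem_take hy.1 s hs)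
        · exact inner_step hG hcond hgf hggreedy k hk y.length y hy hlen htake le_rfl
            (fun h => absurd h (lt_irrefl _))
            (by rw [List.take_length, List.mem_toFinset]; exact hxy)
      obtain ⟨y', h1, h2, h3, h4⟩ := hstep
      exact le_trans h4 (ihd (k+1) (by omega) y' h1 h2 h3)
  have hmlen : m.length = g.length := by
    have h1 : m.toFinset.card = m.length := List.toFinset_card_of_nodup hm.1
    have h2 : g.toFinset.card = g.length := List.toFinset_card_of_nodup hgf.1
    have h3 := hmb.2 _ hgF
    have h4 := hbase.2 _ hmb.1
    omega
  exact houter g.length 0 (by omega) m hm hmlen (by simp)
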